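/- For nonnegative integers m, n, l with l ≤ m ≤ n, the maximum over pairs of sequences A, B with |A| = m, |B| = n having an LCS of length l, of the number of embeddings of a single fixed LCS, equals max over 0 ≤ y ≤ l of C(m−y, l−y) · C(n+y−l, y), where C denotes the binomial coefficient. -/

import Mathlib

/-- `C` is a longest common subsequence of `A` and `B`. -/
def IsLCS {α : Type*} (A B C : List α) : Prop :=
  C.Sublist A ∧ C.Sublist B ∧ ∀ D : List α, D.Sublist A → D.Sublist B → D.length ≤ C.length

/-- The number of embeddings of the string `C` as a common subsequence of `A` and `B`:
pairs of strictly increasing position sequences matching the characters of `C`. -/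
noncomputable def EmbCount {α : Type*} (A B C : List α) : ℕ :=
  Nat.card {pq : (Fin C.length → Fin A.length) × (Fin C.length → Fin B.length) //
    StrictMono pq.1 ∧ StrictMono pq.2 ∧
      ∀ i, A.get (pq.1 i) = C.get i ∧ B.get (pq.2 i) = C.get i}

def Emb {α : Type*} (C A : List α) : Type _ :=
  {f : Fin C.length → Fin A.length // StrictMono f ∧ ∀ i, A.get (f i) = C.get i}

instance {α : Type*} (C A : List α) : Finite (Emb C A) := by
  unfold Emb; infer_instance

lemma embCount_eq_mul {α : Type*} (A B C : List α) :
    EmbCount A B C = Nat.card (Emb C A) * Nat.card (Emb C B) := by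
  rw [EmbCount, ← Nat.card_prod]
  exact Nat.card_congr
    { toFun := fun x => (⟨x.1.1, x.2.1, fun i => (x.2.2.2 i).1⟩,
        ⟨x.1.2, x.2.2.1, fun i => (x.2.2.2 i).2⟩)
      invFun := fun y => ⟨(y.1.1, y.2.1), y.1.2.1, y.2.2.1, fun i => ⟨y.1.2.2 i, y.2.2.2 i⟩⟩
      left_inv := fun x => rfl
      right_inv := fun y => rfl }

lemma card_strictMono (k n : ℕ) :
    Nat.card {f : Fin k → Fin n // StrictMono f} = n.choose k := by
  have e : {f : Fin k → Fin n // StrictMono f} ≃ {s : Finset (Fin n) // s.card = k} :=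
    { toFun := fun f => ⟨Finset.image f.1 Finset.univ, by
        rw [Finset.card_image_of_injective _ f.2.injective, Finset.card_univ, Fintype.card_fin]⟩
      invFun := fun s => ⟨s.1.orderEmbOfFin s.2, (s.1.orderEmbOfFin s.2).strictMono⟩
      left_inv := fun f => Subtype.ext
        ((Finset.orderEmbOfFin_unique _
          (fun x => Finset.mem_image_of_mem _ (Finset.mem_univ x)) f.2).symm)
      right_inv := fun s => Subtype.ext (by
        apply Finset.coe_injective
        rw [Finset.coe_image, Finset.coe_univ, Set.image_univ, Finset.range_orderEmbOfFin]) }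
  rw [Nat.card_congr e, Nat.card_eq_fintype_card, Fintype.card_finset_len, Fintype.card_fin]


def a2b (p q : ℕ) : List ℕ := List.replicate p 0 ++ List.replicate q 1

lemma a2b_length (p q : ℕ) : (a2b p q).length = p + q := by simp [a2b]

lemma a2b_get (p q : ℕ) (j : Fin (a2b p q).length) :
    (a2b p q).get j = if (j : ℕ) < p then 0 else 1 := by
  have hj : (j : ℕ) < p + q := lt_of_lt_of_eq j.isLt (a2b_length p q)
  simp only [List.get_eq_getElem]
  simp only [a2b, List.getElem_append, List.length_replicate]
  split_ifs with h
  · simp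
  · rw [List.getElem_replicate]

lemma a2b_count0 (p q : ℕ) : (a2b p q).count 0 = p := by
  simp [a2b, List.count_replicate]

lemma a2b_count1 (p q : ℕ) : (a2b p q).count 1 = q := by
  simp [a2b, List.count_replicate]

lemma a2b_mem {p q x : ℕ} (h : x ∈ a2b p q) : x = 0 ∨ x = 1 := by
  simp only [a2b, List.mem_append, List.mem_replicate] at h
  rcases h with h | h
  · exact Or.inl h.2
  · exact Or.inr h.2

lemma len01 (D : List ℕ) (h : ∀ x ∈ D, x = 0 ∨ x = 1) :
    D.length = D.count 0 + D.count 1 := by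
  induction D with
  | nil => simp
  | cons a D ih =>
    have ha := h a (by simp)
    have ih' := ih fun x hx => h x (by simp [hx])
    rcases ha with rfl | rfl <;> simp [List.count_cons, ih'] <;> omega

lemma a2b_sublist {r s p q : ℕ} (h1 : r ≤ p) (h2 : s ≤ q) :
    (a2b r s).Sublist (a2b p q) :=
  List.Sublist.append ((List.replicate_sublist_replicate 0).2 h1)
    ((List.replicate_sublist_replicate 1).2 h2)

lemma isLCS_a2b {y l m n : ℕ} (hy : y ≤ l) (hlm : l ≤ m) (hmn : m ≤ n) :
    IsLCS (a2b (m - y) y) (a2b (l - y) (n - l + y)) (a2b (l - y) y) := by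
  refine ⟨a2b_sublist (by omega) le_rfl, a2b_sublist le_rfl (by omega), ?_⟩
  intro D hDA hDB
  have h0 : D.count 0 ≤ (a2b (l - y) (n - l + y)).count 0 := hDB.count_le 0
  have h1 : D.count 1 ≤ (a2b (m - y) y).count 1 := hDA.count_le 1
  rw [a2b_count0] at h0
  rw [a2b_count1] at h1
  have hmem : ∀ x ∈ D, x = 0 ∨ x = 1 := fun x hx => a2b_mem (hDA.subset hx)
  have := len01 D hmem
  rw [a2b_length]
  omega

lemma emb_key {r s p q : ℕ} (F : Emb (a2b r s) (a2b p q)) (i : Fin (a2b r s).length) :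
    (i : ℕ) < r ↔ ((F.1 i : ℕ) < p) := by
  have h := F.2.2 i
  rw [a2b_get, a2b_get] at h
  constructor <;> intro hh <;> by_contra hc <;> simp [hh, hc] at h

def bwdFun (r s p q : ℕ) (g : Fin r → Fin p) (h : Fin s → Fin q)
    (i : Fin (a2b r s).length) : Fin (a2b p q).length :=
  if hi : (i : ℕ) < r
  then Fin.mk (g ⟨(i : ℕ), hi⟩ : ℕ) (by
      have h1 := (g ⟨(i : ℕ), hi⟩).isLt
      have h2 := a2b_length p q
      omega)
  else Fin.mk (p + (h ⟨(i : ℕ) - r, by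
      have h1 := lt_of_lt_of_eq i.isLt (a2b_length r s); omega⟩ : ℕ)) (by
      have h1 := (h ⟨(i : ℕ) - r, by
        have h1 := lt_of_lt_of_eq i.isLt (a2b_length r s); omega⟩).isLt
      have h2 := a2b_length p q
      omega)

lemma bwdFun_pos {r s p q : ℕ} (g : Fin r → Fin p) (h : Fin s → Fin q)
    (i : Fin (a2b r s).length) (hi : (i : ℕ) < r) :
    (bwdFun r s p q g h i : ℕ) = g ⟨(i : ℕ), hi⟩ := by
  rw [bwdFun, dif_pos hi]

lemma bwdFun_neg {r s p q : ℕ} (g : Fin r → Fin p) (h : Fin s → Fin q)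
    (i : Fin (a2b r s).length) (hi : ¬ (i : ℕ) < r) :
    (bwdFun r s p q g h i : ℕ) = p + h ⟨(i : ℕ) - r, by
      have h1 := lt_of_lt_of_eq i.isLt (a2b_length r s); omega⟩ := by
  rw [bwdFun, dif_neg hi]

set_option maxHeartbeats 1000000 in
lemma card_emb_a2b (r s p q : ℕ) :
    Nat.card (Emb (a2b r s) (a2b p q)) = p.choose r * q.choose s := by
  have hC := a2b_length r s
  have hA := a2b_length p q
  rw [← card_strictMono r p, ← card_strictMono s q, ← Nat.card_prod]
  apply Nat.card_congr
  refine
    { toFun := fun F =>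
        (⟨fun j => ⟨(F.1 ⟨(j : ℕ), by have := j.isLt; omega⟩ : ℕ), ?_⟩, ?_⟩,
         ⟨fun j => ⟨(F.1 ⟨r + (j : ℕ), by have := j.isLt; omega⟩ : ℕ) - p, ?_⟩, ?_⟩)
      invFun := fun gh =>
        ⟨bwdFun r s p q gh.1.1 gh.2.1, ?_, ?_⟩
      left_inv := ?_
      right_inv := ?_ }
  · exact (emb_key F _).1 j.isLt
  · intro j1 j2 hj
    simp only [Fin.mk_lt_mk, Fin.val_fin_lt]
    exact F.2.1 (by simpa using hj)
  · have h1 := (emb_key F ⟨r + (j : ℕ), by have := j.isLt; omega⟩)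
    have h2 := (F.1 ⟨r + (j : ℕ), by have := j.isLt; omega⟩).isLt
    simp only [Fin.val_mk] at h1
    omega
  · intro j1 j2 hj
    have hm : F.1 ⟨r + (j1 : ℕ), by have := j1.isLt; omega⟩
        < F.1 ⟨r + (j2 : ℕ), by have := j2.isLt; omega⟩ :=
      F.2.1 (by simp only [Fin.mk_lt_mk]; have := hj; omega)
    have h1 := (emb_key F ⟨r + (j1 : ℕ), by have := j1.isLt; omega⟩)
    simp only [Fin.val_mk] at h1
    have := Fin.lt_def.1 hm
    simp only [Fin.mk_lt_mk]
    omega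
  · -- strict mono of bwdFun
    intro i1 i2 hi
    have hv := Fin.lt_def.1 hi
    rw [Fin.lt_def]
    by_cases h1 : (i1 : ℕ) < r <;> by_cases h2 : (i2 : ℕ) < r
    · rw [bwdFun_pos _ _ _ h1, bwdFun_pos _ _ _ h2]
      exact gh.1.2 (show (⟨(i1 : ℕ), h1⟩ : Fin r) < ⟨(i2 : ℕ), h2⟩ by
        simp only [Fin.mk_lt_mk]; exact hv)
    · rw [bwdFun_pos _ _ _ h1, bwdFun_neg _ _ _ h2]
      have := (gh.1.1 ⟨(i1 : ℕ), h1⟩).isLt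
      omega
    · omega
    · rw [bwdFun_neg _ _ _ h1, bwdFun_neg _ _ _ h2]
      have hm : gh.2.1 ⟨(i1 : ℕ) - r, by have := lt_of_lt_of_eq i1.isLt (a2b_length r s); omega⟩
          < gh.2.1 ⟨(i2 : ℕ) - r, by have := lt_of_lt_of_eq i2.isLt (a2b_length r s); omega⟩ :=
        gh.2.2 (by simp only [Fin.mk_lt_mk]; omega)
      have := Fin.lt_def.1 hm
      omega
  · -- get condition of bwdFun
    intro i
    rw [a2b_get, a2b_get]
    by_cases hi : (i : ℕ) < r
    · rw [if_pos hi, if_pos (by rw [bwdFun_pos _ _ _ hi]; exact (gh.1.1 _).isLt)]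
    · rw [if_neg hi, if_neg (by rw [bwdFun_neg _ _ _ hi]; omega)]
  · -- left_inv
    intro F
    apply Subtype.ext
    funext i
    apply Fin.ext
    by_cases hi : (i : ℕ) < r
    · rw [bwdFun_pos _ _ _ hi]
    · rw [bwdFun_neg _ _ _ hi]
      simp only [Fin.val_mk]
      have he : (⟨r + ((i : ℕ) - r), by omega⟩ : Fin (a2b r s).length) = i :=
        Fin.ext (by simp only [Fin.val_mk]; omega)
      rw [he]
      have hk : ¬ ((F.1 i : ℕ) < p) := fun hc => hi ((emb_key F i).2 hc)
      omega
  · -- right_inv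
    intro gh
    apply Prod.ext
    · apply Subtype.ext
      funext j
      apply Fin.ext
      have hj : ((⟨(j : ℕ), by omega⟩ : Fin (a2b r s).length) : ℕ) < r := j.isLt
      rw [bwdFun_pos _ _ _ hj]
    · apply Subtype.ext
      funext j
      apply Fin.ext
      have hj : ¬ ((⟨r + (j : ℕ), by have := j.isLt; omega⟩ : Fin (a2b r s).length) : ℕ) < r := by
        simp only [Fin.val_mk]; omega
      dsimp only
      rw [bwdFun_neg _ _ _ hj]
      have key2 : ∀ w : Fin s, w = j → p + (gh.2.1 w : ℕ) - p = gh.2.1 j := by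
        rintro w rfl
        have := (gh.2.1 w).isLt
        omega
      apply key2
      apply Fin.ext
      simp only [Fin.val_mk]
      omega
lemma double_sublist {α : Type*} {A C : List α} {i : Fin C.length}
    (F G : Emb C A) (hne : F.1 i ≠ G.1 i) :
    (C.take ((i : ℕ) + 1) ++ C.drop (i : ℕ)).Sublist A := by
  have hCi := i.isLt
  set u : Fin C.length → Fin A.length := fun j => min (F.1 j) (G.1 j) with hu
  set v : Fin C.length → Fin A.length := fun j => max (F.1 j) (G.1 j) with hv
  have hum : StrictMono u := fun j k hjk =>
    lt_min ((min_le_left _ _).trans_lt (F.2.1 hjk)) ((min_le_right _ _).trans_lt (G.2.1 hjk))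
  have hvm : StrictMono v := fun j k hjk =>
    max_lt ((F.2.1 hjk).trans_le (le_max_left _ _)) ((G.2.1 hjk).trans_le (le_max_right _ _))
  have hug : ∀ j, A.get (u j) = C.get j := by
    intro j
    show A.get (min (F.1 j) (G.1 j)) = C.get j
    rcases min_choice (F.1 j) (G.1 j) with h | h <;> rw [h]
    · exact F.2.2 j
    · exact G.2.2 j
  have hvg : ∀ j, A.get (v j) = C.get j := by
    intro j
    show A.get (max (F.1 j) (G.1 j)) = C.get j
    rcases max_choice (F.1 j) (G.1 j) with h | h <;> rw [h]
    · exact F.2.2 j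
    · exact G.2.2 j
  have hlt : (u i : ℕ) < (v i : ℕ) := Fin.lt_def.1 (min_lt_max.2 hne)
  have hAu := (u i).isLt
  have hAv := (v i).isLt
  rw [← List.take_append_drop ((u i : ℕ) + 1) A]
  apply List.Sublist.append
  · rw [List.sublist_iff_exists_fin_orderEmbedding_get_eq]
    have hlen1 : (C.take ((i : ℕ) + 1)).length = (i : ℕ) + 1 := by
      rw [List.length_take]; omega
    have hlen2 : (A.take ((u i : ℕ) + 1)).length = (u i : ℕ) + 1 := by
      rw [List.length_take]; omega
    have hmono : StrictMono (fun j : Fin (C.take ((i : ℕ) + 1)).length =>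
        (⟨(u ⟨(j : ℕ), by have := j.isLt; omega⟩ : ℕ), by
          have h1 := Fin.le_def.1 (hum.monotone
            (show (⟨(j : ℕ), by have := j.isLt; omega⟩ : Fin C.length) ≤ i by
              rw [Fin.le_def]; have := j.isLt; simp only [Fin.val_mk]; omega))
          omega⟩ : Fin (A.take ((u i : ℕ) + 1)).length)) := by
      intro j1 j2 hj
      rw [Fin.mk_lt_mk]
      exact Fin.lt_def.1 (hum (by rw [Fin.mk_lt_mk]; exact hj))
    refine ⟨OrderEmbedding.ofStrictMono _ hmono, ?_⟩
    intro ix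
    simp only [List.get_eq_getElem, List.getElem_take, OrderEmbedding.coe_ofStrictMono]
    have h2 := hug ⟨(ix : ℕ), by have := ix.isLt; omega⟩
    simp only [List.get_eq_getElem] at h2
    exact h2.symm
  · rw [List.sublist_iff_exists_fin_orderEmbedding_get_eq]
    have hlen3 : (C.drop (i : ℕ)).length = C.length - (i : ℕ) := List.length_drop
    have hlen4 : (A.drop ((u i : ℕ) + 1)).length = A.length - ((u i : ℕ) + 1) :=
      List.length_drop
    have hvge : ∀ (j : ℕ) (hj : (i : ℕ) + j < C.length),
        (u i : ℕ) + 1 ≤ (v ⟨(i : ℕ) + j, hj⟩ : ℕ) := by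
      intro j hj
      have h1 := Fin.le_def.1 (hvm.monotone (show i ≤ (⟨(i : ℕ) + j, hj⟩ : Fin C.length) by
        rw [Fin.le_def]; simp only [Fin.val_mk]; omega))
      omega
    have hmono : StrictMono (fun j : Fin (C.drop (i : ℕ)).length =>
        (⟨(v ⟨(i : ℕ) + (j : ℕ), by have := j.isLt; omega⟩ : ℕ) - ((u i : ℕ) + 1), by
          have h1 := (v ⟨(i : ℕ) + (j : ℕ), by have := j.isLt; omega⟩).isLt
          omega⟩ : Fin (A.drop ((u i : ℕ) + 1)).length)) := by
      intro j1 j2 hj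
      rw [Fin.mk_lt_mk]
      have h1 := Fin.lt_def.1 (hvm (show (⟨(i : ℕ) + (j1 : ℕ), by have := j1.isLt; omega⟩ : Fin C.length)
          < ⟨(i : ℕ) + (j2 : ℕ), by have := j2.isLt; omega⟩ by
        rw [Fin.mk_lt_mk]; have := Fin.lt_def.1 hj; omega))
      have h2 := hvge (j1 : ℕ) (by have := j1.isLt; omega)
      omega
    refine ⟨OrderEmbedding.ofStrictMono _ hmono, ?_⟩
    intro ix
    simp only [List.get_eq_getElem, List.getElem_drop, OrderEmbedding.coe_ofStrictMono]
    have hx : (i : ℕ) + (ix : ℕ) < C.length := by have := ix.isLt; omega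
    have h2 := hvg ⟨(i : ℕ) + (ix : ℕ), hx⟩
    simp only [List.get_eq_getElem] at h2
    have h3 := hvge (ix : ℕ) hx
    have hidx : (u i : ℕ) + 1 + ((v ⟨(i : ℕ) + (ix : ℕ), hx⟩ : ℕ) - ((u i : ℕ) + 1))
        = (v ⟨(i : ℕ) + (ix : ℕ), hx⟩ : ℕ) := by omega
    simp only [hidx]
    exact h2.symm

lemma rigid {α : Type*} {A B C : List α} (h : IsLCS A B C) (i : Fin C.length)
    (hA : ∃ F G : Emb C A, F.1 i ≠ G.1 i) (hB : ∃ F G : Emb C B, F.1 i ≠ G.1 i) : False := by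
  obtain ⟨F, G, hFG⟩ := hA
  obtain ⟨F', G', hFG'⟩ := hB
  have h3 := h.2.2 _ (double_sublist F G hFG) (double_sublist F' G' hFG')
  rw [List.length_append, List.length_take, List.length_drop] at h3
  have := i.isLt
  omega
lemma card_emb_le {α : Type*} (C A : List α) (R : Finset (Fin C.length))
    (hR : ∀ F G : Emb C A, ∀ i ∈ R, F.1 i = G.1 i) :
    Nat.card (Emb C A) ≤ (A.length - R.card).choose (C.length - R.card) := by
  classical
  rcases isEmpty_or_nonempty (Emb C A) with h | h
  · rw [Nat.card_of_isEmpty]; exact Nat.zero_le _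
  obtain ⟨F0⟩ := h
  have himg : ∀ F : Emb C A, Finset.image F0.1 R ⊆ Finset.image F.1 Finset.univ := by
    intro F
    rw [Finset.image_congr (g := F.1) (fun i hi => hR F0 F i hi)]
    exact Finset.image_subset_image (Finset.subset_univ R)
  have hcardimg : ∀ F : Emb C A, (Finset.image F.1 Finset.univ).card = C.length := by
    intro F
    rw [Finset.card_image_of_injective _ F.2.1.injective, Finset.card_univ, Fintype.card_fin]
  have hR0 : (Finset.image F0.1 R).card = R.card :=
    Finset.card_image_of_injective _ F0.2.1.injective
  set T : Finset (Fin A.length) := Finset.univ \ Finset.image F0.1 R with hT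
  have hTcard : T.card = A.length - R.card := by
    rw [hT, Finset.card_sdiff_of_subset (Finset.subset_univ _), Finset.card_univ, Fintype.card_fin, hR0]
  set Φ : Emb C A → {t // t ∈ Finset.powersetCard (C.length - R.card) T} := fun F =>
    ⟨Finset.image F.1 Finset.univ \ Finset.image F0.1 R, Finset.mem_powersetCard.2
      ⟨Finset.sdiff_subset_sdiff (Finset.subset_univ _) (Finset.Subset.refl _), by
        rw [Finset.card_sdiff_of_subset (himg F), hcardimg F, hR0]⟩⟩ with hΦ
  have hinj : Function.Injective Φ := by
    intro F G hFG
    have hsd : Finset.image F.1 Finset.univ \ Finset.image F0.1 R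
        = Finset.image G.1 Finset.univ \ Finset.image F0.1 R := congrArg Subtype.val hFG
    have h1 : Finset.image F.1 Finset.univ = Finset.image G.1 Finset.univ := by
      rw [← Finset.sdiff_union_of_subset (himg F), ← Finset.sdiff_union_of_subset (himg G), hsd]
    have hF := Finset.orderEmbOfFin_unique (hcardimg F)
      (fun x => Finset.mem_image_of_mem F.1 (Finset.mem_univ x)) F.2.1
    have hG := Finset.orderEmbOfFin_unique (hcardimg F)
      (fun x => by rw [h1]; exact Finset.mem_image_of_mem G.1 (Finset.mem_univ x)) G.2.1
    exact Subtype.ext (hF.trans hG.symm)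
  calc Nat.card (Emb C A) ≤ Nat.card {t // t ∈ Finset.powersetCard (C.length - R.card) T} :=
        Nat.card_le_card_of_injective Φ hinj
    _ = (Finset.powersetCard (C.length - R.card) T).card := by
        rw [Nat.card_eq_fintype_card, Fintype.card_coe]
    _ = T.card.choose (C.length - R.card) := Finset.card_powersetCard _ _
    _ = (A.length - R.card).choose (C.length - R.card) := by rw [hTcard]
theorem stmt8 (m n l : ℕ) (hlm : l ≤ m) (hmn : m ≤ n) :
    IsGreatest {e : ℕ | ∃ (α : Type) (A B C : List α),
        A.length = m ∧ B.length = n ∧ C.length = l ∧ IsLCS A B C ∧ e = EmbCount A B C}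
      ((Finset.range (l + 1)).sup fun y =>
        Nat.choose (m - y) (l - y) * Nat.choose (n + y - l) y) := by
  constructor
  · -- membership
    obtain ⟨y, hy, hsup⟩ := Finset.exists_mem_eq_sup (Finset.range (l + 1))
      ⟨0, Finset.mem_range.2 (by omega)⟩
      (fun y => Nat.choose (m - y) (l - y) * Nat.choose (n + y - l) y)
    have hyl : y ≤ l := by have := Finset.mem_range.1 hy; omega
    refine ⟨ℕ, a2b (m - y) y, a2b (l - y) (n - l + y), a2b (l - y) y, ?_, ?_, ?_, ?_, ?_⟩
    · rw [a2b_length]; omega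
    · rw [a2b_length]; omega
    · rw [a2b_length]; omega
    · exact isLCS_a2b hyl hlm hmn
    · rw [hsup, embCount_eq_mul, card_emb_a2b, card_emb_a2b]
      have hnl : n + y - l = n - l + y := by omega
      simp [Nat.choose_self, hnl]
  · -- upper bound
    rintro e ⟨α, A, B, C, hAm, hBn, hCl, hLCS, rfl⟩
    subst hAm hBn hCl
    classical
    set RA : Finset (Fin C.length) := Finset.univ.filter
      (fun i => ∀ F G : Emb C A, F.1 i = G.1 i) with hRA
    set RB : Finset (Fin C.length) := Finset.univ.filter
      (fun i => ∀ F G : Emb C B, F.1 i = G.1 i) with hRB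
    have hcover : ∀ i, i ∈ RA ∨ i ∈ RB := by
      intro i
      by_contra hc
      push_neg at hc
      obtain ⟨h1, h2⟩ := hc
      rw [hRA, Finset.mem_filter] at h1
      rw [hRB, Finset.mem_filter] at h2
      push_neg at h1 h2
      exact rigid hLCS i (h1 (Finset.mem_univ i)) (h2 (Finset.mem_univ i))
    have hRAc : RA.card ≤ C.length := le_trans (Finset.card_le_univ RA) (by simp)
    have hRBc : RB.card ≤ C.length := le_trans (Finset.card_le_univ RB) (by simp)
    have hsum : C.length ≤ RA.card + RB.card := by
      calc C.length = (Finset.univ : Finset (Fin C.length)).card := by simp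
        _ ≤ (RA ∪ RB).card := Finset.card_le_card (fun i _ => Finset.mem_union.2 (hcover i))
        _ ≤ RA.card + RB.card := Finset.card_union_le _ _
    set y := C.length - RB.card with hy
    have h1 : Nat.card (Emb C A) ≤ (A.length - RA.card).choose (C.length - RA.card) :=
      card_emb_le C A RA (fun F G i hi => (Finset.mem_filter.1 hi).2 F G)
    have h2 : Nat.card (Emb C B) ≤ (B.length - RB.card).choose (C.length - RB.card) :=
      card_emb_le C B RB (fun F G i hi => (Finset.mem_filter.1 hi).2 F G)
    have e1 : (A.length - RA.card).choose (C.length - RA.card)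
        ≤ (A.length - y).choose (C.length - y) := by
      rw [show C.length - RA.card = (A.length - RA.card) - (A.length - C.length) by omega,
        show C.length - y = (A.length - y) - (A.length - C.length) by omega,
        Nat.choose_symm (by omega), Nat.choose_symm (by omega)]
      exact Nat.choose_le_choose _ (by omega)
    have e2 : (B.length - RB.card).choose (C.length - RB.card)
        = (B.length + y - C.length).choose y := by
      rw [show B.length - RB.card = B.length + y - C.length by omega,
        show C.length - RB.card = y by omega]
    calc EmbCount A B C = Nat.card (Emb C A) * Nat.card (Emb C B) := embCount_eq_mul A B C
      _ ≤ (A.length - y).choose (C.length - y) * (B.length + y - C.length).choose y :=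
          Nat.mul_le_mul (h1.trans e1) (le_of_le_of_eq h2 e2)
      _ ≤ _ := Finset.le_sup (f := fun y =>
          (A.length - y).choose (C.length - y) * (B.length + y - C.length).choose y)
          (Finset.mem_range.2 (by omega))
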